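/- With the same RIFS setup, the typical Hausdorff dimension of the random attractor is infimal: the set $\{\omega \in \Omega : \dim_H F_\omega = \inf_{u \in \Omega} \dim_H F_u\}$ is residual in $(\Omega, d_\Omega)$. -/

import Mathlib

open Metric MeasureTheory Filter Set
open scoped ENNReal NNReal

/-- The level-`k` approximation of the random attractor: the union over all length-`k`
words `(i₁,…,i_k)` with `i_l ∈ 𝓘_{ω_l}` of `S_{ω₁,i₁} ∘ ⋯ ∘ S_{ω_k,i_k}(K₀)`. -/
def levelSets {X : Type*} {N : ℕ} (m : Fin N → ℕ) (S : ∀ i, Fin (m i) → X → X) (K₀ : Set X) :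
    (ℕ → Fin N) → ℕ → Set X
  | _, 0 => K₀
  | ω, k+1 => ⋃ j : Fin (m (ω 0)), S (ω 0) j '' levelSets m S K₀ (fun n => ω (n+1)) k

/-- The random attractor `F_ω = ⋂_k ⋃_{i₁,…,i_k} S_{ω₁,i₁} ∘ ⋯ ∘ S_{ω_k,i_k}(K₀)`. -/
def attractorOf {X : Type*} {N : ℕ} (m : Fin N → ℕ) (S : ∀ i, Fin (m i) → X → X)
    (K₀ : Set X) (ω : ℕ → Fin N) : Set X :=
  ⋂ k, levelSets m S K₀ ω k

/-- `φ` is a bi-Lipschitz contraction. -/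
def IsBiLipContraction {K : Type*} [MetricSpace K] (φ : K → K) : Prop :=
  ∃ c C : ℝ, 0 < c ∧ C < 1 ∧
    ∀ x y, c * dist x y ≤ dist (φ x) (φ y) ∧ dist (φ x) (φ y) ≤ C * dist x y



noncomputable section AuxContent

variable {X : Type*} [MetricSpace X]

/-- Hausdorff-type content with unrestricted countable covers. -/
def hcont (s : ℝ) (A : Set X) : ℝ≥0∞ :=
  ⨅ (C : ℕ → Set X) (_ : A ⊆ ⋃ n, C n), ∑' n, EMetric.diam (C n) ^ s

lemma hcont_le {s : ℝ} {A : Set X} {C : ℕ → Set X} (h : A ⊆ ⋃ n, C n) :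
    hcont s A ≤ ∑' n, EMetric.diam (C n) ^ s :=
  iInf₂_le C h

lemma hcont_lt_iff {s : ℝ} {A : Set X} {c : ℝ≥0∞} :
    hcont s A < c ↔ ∃ C : ℕ → Set X, A ⊆ ⋃ n, C n ∧ ∑' n, EMetric.diam (C n) ^ s < c := by
  simp only [hcont, iInf_lt_iff, exists_prop]

lemma hcont_mono {s : ℝ} {A B : Set X} (h : A ⊆ B) : hcont s A ≤ hcont s B :=
  le_iInf fun C => le_iInf fun hC => hcont_le (h.trans hC)

lemma hcont_empty {s : ℝ} (hs : 0 < s) : hcont s (∅ : Set X) = 0 := by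
  refine le_antisymm ((hcont_le (C := fun _ => (∅ : Set X)) (empty_subset _)).trans ?_) (zero_le (a := _))
  simp [EMetric.diam_empty, ENNReal.zero_rpow_of_pos hs, hs, EMetric.diam]

lemma hcont_union_zero {s : ℝ} {A B : Set X} (hA : hcont s A = 0) (hB : hcont s B = 0) :
    hcont s (A ∪ B) = 0 := by
  refine le_antisymm (ENNReal.le_of_forall_pos_le_add fun ε hε _ => ?_) (zero_le (a := _))
  rw [zero_add]
  have hε2 : (0 : ℝ≥0∞) < ε / 2 := ENNReal.div_pos (by exact_mod_cast hε.ne') (by norm_num)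
  obtain ⟨C, hC, hCs⟩ := hcont_lt_iff.1 (hA ▸ hε2)
  obtain ⟨D, hD, hDs⟩ := hcont_lt_iff.1 (hB ▸ hε2)
  set E : ℕ → Set X := fun n => if Even n then C (n / 2) else D (n / 2) with hE
  have hcover : A ∪ B ⊆ ⋃ n, E n := by
    rintro x (hx | hx)
    · obtain ⟨_, ⟨k, rfl⟩, hk⟩ := hC hx
      exact mem_iUnion.2 ⟨2 * k, by simpa [hE, even_two_mul, Nat.mul_div_cancel_left k two_pos] using hk⟩
    · obtain ⟨_, ⟨k, rfl⟩, hk⟩ := hD hx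
      refine mem_iUnion.2 ⟨2 * k + 1, ?_⟩
      have h1 : ¬ Even (2 * k + 1) := by simp [Nat.even_add_one, even_two_mul]
      have h2 : (2 * k + 1) / 2 = k := by omega
      simpa [hE, h1, h2] using hk
  refine (hcont_le hcover).trans ?_
  have := tsum_even_add_odd (f := fun n => EMetric.diam (E n) ^ s) ENNReal.summable ENNReal.summable
  rw [← this]
  have he : ∀ k, EMetric.diam (E (2 * k)) ^ s = EMetric.diam (C k) ^ s := fun k => by
    simp [hE, even_two_mul, Nat.mul_div_cancel_left k two_pos]
  have ho : ∀ k, EMetric.diam (E (2 * k + 1)) ^ s = EMetric.diam (D k) ^ s := fun k => by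
    have h1 : ¬ Even (2 * k + 1) := by simp [Nat.even_add_one, even_two_mul]
    have h2 : (2 * k + 1) / 2 = k := by omega
    simp [hE, h1, h2]
  calc (∑' k, EMetric.diam (E (2 * k)) ^ s) + ∑' k, EMetric.diam (E (2 * k + 1)) ^ s
      = (∑' k, EMetric.diam (C k) ^ s) + ∑' k, EMetric.diam (D k) ^ s := by
        simp_rw [he, ho]
    _ ≤ ε / 2 + ε / 2 := add_le_add hCs.le hDs.le
    _ = ε := ENNReal.add_halves ε

lemma hcont_iUnion_fin_zero {s : ℝ} (hs : 0 < s) : ∀ {M : ℕ} {A : Fin M → Set X},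
    (∀ j, hcont s (A j) = 0) → hcont s (⋃ j, A j) = 0 := by
  intro M
  induction M with
  | zero => intro A _; simpa [iUnion_of_empty] using hcont_empty (X := X) hs
  | succ M IH =>
    intro A hA
    have : (⋃ j, A j) = A 0 ∪ ⋃ j : Fin M, A j.succ := by
      ext x; simp [mem_iUnion, Fin.exists_fin_succ]
    rw [this]
    exact hcont_union_zero (hA 0) (IH fun j => hA j.succ)

lemma hcont_image_zero {s : ℝ} (hs : 0 < s) {φ : X → X} {L : ℝ≥0} (hφ : LipschitzWith L φ)
    {A : Set X} (h : hcont s A = 0) : hcont s (φ '' A) = 0 := by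
  refine le_antisymm (ENNReal.le_of_forall_pos_le_add fun ε hε _ => ?_) (zero_le (a := _))
  rw [zero_add]
  set M : ℝ≥0∞ := (L : ℝ≥0∞) ^ s + 1 with hM
  have hM0 : M ≠ 0 := by simp [hM]
  have hMt : M ≠ ⊤ := by
    simp only [hM, ENNReal.add_ne_top]
    exact ⟨ENNReal.rpow_ne_top_of_nonneg hs.le ENNReal.coe_ne_top, ENNReal.one_ne_top⟩
  have hpos : (0 : ℝ≥0∞) < ε / M := ENNReal.div_pos (by exact_mod_cast hε.ne') hMt
  obtain ⟨C, hC, hCs⟩ := hcont_lt_iff.1 (h ▸ hpos)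
  have hcover : φ '' A ⊆ ⋃ n, φ '' C n := by
    rw [← image_iUnion]; exact image_mono hC
  refine (hcont_le hcover).trans ?_
  have hterm : ∀ n, EMetric.diam (φ '' C n) ^ s ≤ (L : ℝ≥0∞) ^ s * EMetric.diam (C n) ^ s := by
    intro n
    calc EMetric.diam (φ '' C n) ^ s ≤ ((L : ℝ≥0∞) * EMetric.diam (C n)) ^ s :=
          ENNReal.rpow_le_rpow (hφ.ediam_image_le _) hs.le
      _ = (L : ℝ≥0∞) ^ s * EMetric.diam (C n) ^ s := ENNReal.mul_rpow_of_nonneg _ _ hs.le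
  calc ∑' n, EMetric.diam (φ '' C n) ^ s
      ≤ ∑' n, (L : ℝ≥0∞) ^ s * EMetric.diam (C n) ^ s := ENNReal.tsum_le_tsum hterm
    _ = (L : ℝ≥0∞) ^ s * ∑' n, EMetric.diam (C n) ^ s := ENNReal.tsum_mul_left
    _ ≤ M * (ε / M) := mul_le_mul' (hM ▸ le_self_add) hCs.le
    _ = ε := ENNReal.mul_div_cancel hM0 hMt

end AuxContent

noncomputable section AuxDim

variable {X : Type*} [MetricSpace X] [MeasurableSpace X] [BorelSpace X]

lemma hcont_le_hausdorffMeasure {s : ℝ} (hs : 0 < s) (A : Set X) : hcont s A ≤ μH[s] A := by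
  rw [MeasureTheory.Measure.hausdorffMeasure_apply]
  refine le_trans ?_ (le_iSup₂ (f := fun (r : ℝ≥0∞) (_ : 0 < r) =>
    ⨅ (t : ℕ → Set X) (_ : A ⊆ ⋃ n, t n) (_ : ∀ n, EMetric.diam (t n) ≤ r),
      ∑' n, ⨆ _ : (t n).Nonempty, EMetric.diam (t n) ^ s) 1 one_pos)
  refine le_iInf fun t => le_iInf fun ht => le_iInf fun _ => ?_
  refine (hcont_le ht).trans (ENNReal.tsum_le_tsum fun n => ?_)
  rcases eq_empty_or_nonempty (t n) with h | h
  · simp [h, ENNReal.zero_rpow_of_pos hs, hs, EMetric.diam]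
  · simp [h]

lemma hausdorffMeasure_of_hcont_zero {s d : ℝ} (hs : 0 < s) (hsd : s < d) {A : Set X}
    (h : hcont s A = 0) : μH[d] A = 0 := by
  refine le_antisymm ?_ (zero_le (a := _))
  rw [MeasureTheory.Measure.hausdorffMeasure_apply]
  refine iSup₂_le fun r hr => ?_
  refine ENNReal.le_of_forall_pos_le_add fun ε hε _ => ?_
  rw [zero_add]
  set ρ : ℝ≥0∞ := min r 1 with hρ
  have hρ0 : 0 < ρ := lt_min hr one_pos
  have hρt : ρ ≠ ⊤ := (min_le_right _ _).trans_lt (by norm_num) |>.ne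
  set δ : ℝ≥0∞ := min (min 1 (ε : ℝ≥0∞)) (ρ ^ s) with hδ
  have hδ0 : 0 < δ := by
    refine lt_min (lt_min one_pos ?_) (ENNReal.rpow_pos hρ0 hρt)
    exact_mod_cast hε
  obtain ⟨C, hC, hCs⟩ := hcont_lt_iff.1 (h ▸ hδ0)
  have hdiam : ∀ n, EMetric.diam (C n) ^ s ≤ δ := fun n =>
    (ENNReal.le_tsum n).trans hCs.le
  have hdiam1 : ∀ n, EMetric.diam (C n) ≤ 1 := by
    intro n
    have h1 : EMetric.diam (C n) ^ s ≤ 1 ^ s := by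
      refine (hdiam n).trans ?_
      calc δ ≤ min 1 (ε : ℝ≥0∞) := min_le_left _ _
        _ ≤ 1 := min_le_left _ _
        _ = 1 ^ s := (ENNReal.one_rpow s).symm
    have := ENNReal.rpow_le_rpow h1 (le_of_lt (by positivity : (0:ℝ) < 1 / s))
    rwa [← ENNReal.rpow_mul, ← ENNReal.rpow_mul, mul_one_div, div_self hs.ne',
      ENNReal.rpow_one, ENNReal.rpow_one] at this
  have hdiamr : ∀ n, EMetric.diam (C n) ≤ r := by
    intro n
    have h1 : EMetric.diam (C n) ^ s ≤ ρ ^ s := (hdiam n).trans (min_le_right _ _)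
    have := ENNReal.rpow_le_rpow h1 (le_of_lt (by positivity : (0:ℝ) < 1 / s))
    rw [← ENNReal.rpow_mul, ← ENNReal.rpow_mul, mul_one_div, div_self hs.ne',
      ENNReal.rpow_one, ENNReal.rpow_one] at this
    exact this.trans (min_le_left _ _)
  refine le_trans (iInf₂_le C hC) ?_
  refine le_trans (iInf_le _ hdiamr) ?_
  calc (∑' n, ⨆ _ : (C n).Nonempty, EMetric.diam (C n) ^ d)
      ≤ ∑' n, EMetric.diam (C n) ^ d :=
        ENNReal.tsum_le_tsum fun n => iSup_le fun _ => le_rfl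
    _ ≤ ∑' n, EMetric.diam (C n) ^ s :=
        ENNReal.tsum_le_tsum fun n =>
          ENNReal.rpow_le_rpow_of_exponent_ge (hdiam1 n) hsd.le
    _ ≤ δ := hCs.le
    _ ≤ ε := (min_le_left _ _).trans (min_le_right _ _)

lemma dimH_le_of_hcont_zero {s : ℝ} (hs : 0 < s) {A : Set X} (h : hcont s A = 0) :
    dimH A ≤ ENNReal.ofReal s := by
  refine dimH_le fun d' hd' => ?_
  by_contra hlt
  push_neg at hlt
  have hsd : s < (d' : ℝ) := by
    have h1 : ENNReal.ofReal s < ENNReal.ofReal (d' : ℝ) := by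
      rwa [ENNReal.ofReal_coe_nnreal]
    have h2 : 0 < (d' : ℝ) := by
      have : (0 : ℝ≥0∞) < (d' : ℝ≥0∞) := lt_trans (ENNReal.ofReal_pos.2 hs) hlt
      exact_mod_cast this
    exact (ENNReal.ofReal_lt_ofReal_iff h2).1 h1
  exact absurd hd' (by simp [hausdorffMeasure_of_hcont_zero hs hsd h])

end AuxDim

noncomputable section AuxReg

variable {X : Type*} [MetricSpace X]

lemma tsum_halves_aux (c : ℝ≥0∞) : ∑' n : ℕ, c * 2⁻¹ ^ (n + 1) = c := by
  rw [ENNReal.tsum_mul_left]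
  have h1 : ∑' n : ℕ, (2⁻¹ : ℝ≥0∞) ^ (n + 1) = 1 := by
    have h2 : ∀ n : ℕ, (2⁻¹ : ℝ≥0∞) ^ (n + 1) = 2⁻¹ ^ n * 2⁻¹ := fun n => pow_succ _ _
    simp_rw [h2]
    rw [ENNReal.tsum_mul_right, ENNReal.tsum_geometric]
    have : (1 : ℝ≥0∞) - 2⁻¹ = 2⁻¹ := by
      rw [ENNReal.sub_eq_of_eq_add (by norm_num)]
      rw [ENNReal.inv_two_add_inv_two]
    rw [this, inv_inv]
    exact ENNReal.mul_inv_cancel (by norm_num) (by norm_num)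
  rw [h1, mul_one]

lemma exists_thickening_rpow {s : ℝ} (hs : 0 < s) {d e : ℝ≥0∞} (hd : d ≠ ⊤) (he : 0 < e) :
    ∃ δ : ℝ, 0 < δ ∧ (d + 2 * ENNReal.ofReal δ) ^ s ≤ d ^ s + e := by
  have hct : ContinuousAt (fun x : ℝ≥0∞ => (d + x) ^ s) 0 :=
    (ENNReal.continuous_rpow_const.comp (continuous_const.add continuous_id)).continuousAt
  have h0 : (fun x : ℝ≥0∞ => (d + x) ^ s) 0 ∈ Iio (d ^ s + e) := by
    simp only [add_zero, mem_Iio]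
    exact ENNReal.lt_add_right (ENNReal.rpow_ne_top_of_nonneg hs.le hd) he.ne'
  have hnh : (fun x : ℝ≥0∞ => (d + x) ^ s) ⁻¹' Iio (d ^ s + e) ∈ nhds (0 : ℝ≥0∞) :=
    hct.preimage_mem_nhds (isOpen_Iio.mem_nhds h0)
  obtain ⟨a, ha, hsub⟩ := ENNReal.nhds_zero_basis.mem_iff.1 hnh
  obtain ⟨b, hb0, hba⟩ := exists_between ha
  have hbt : b ≠ ⊤ := (hba.trans_le le_top).ne
  refine ⟨(b / 2).toReal, ?_, ?_⟩
  · refine ENNReal.toReal_pos ?_ ?_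
    · exact (ENNReal.div_pos hb0.ne' (by norm_num)).ne'
    · exact (ENNReal.div_lt_top hbt (by norm_num)).ne
  · have hofr : ENNReal.ofReal (b / 2).toReal = b / 2 :=
      ENNReal.ofReal_toReal ((ENNReal.div_lt_top hbt (by norm_num)).ne)
    have h2 : 2 * (b / 2) = b := ENNReal.mul_div_cancel' (by norm_num) (by norm_num)
    have hmem : 2 * ENNReal.ofReal (b / 2).toReal ∈ Iio a := by
      rw [hofr, h2]; exact hba
    exact le_of_lt (hsub hmem)

lemma exists_nat_subset_open_of_iInter {A : ℕ → Set X} (hA : ∀ k, IsCompact (A k))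
    (hanti : Antitone A) {U : Set X} (hU : IsOpen U) (h : ⋂ k, A k ⊆ U) :
    ∃ k, A k ⊆ U := by
  by_contra hcon
  push_neg at hcon
  have hne : ∀ k, (A k \ U).Nonempty := by
    intro k
    obtain ⟨x, hx, hxU⟩ := not_subset.1 (hcon k)
    exact ⟨x, hx, hxU⟩
  have key := IsCompact.nonempty_iInter_of_directed_nonempty_isCompact_isClosed
    (fun k => A k \ U)
    (fun i j => ⟨max i j, diff_subset_diff_left (hanti (le_max_left _ _)),
      diff_subset_diff_left (hanti (le_max_right _ _))⟩)
    hne (fun k => (hA k).diff hU) (fun k => ((hA k).isClosed).sdiff hU)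
  obtain ⟨x, hx⟩ := key
  have hx1 : x ∈ ⋂ k, A k := mem_iInter.2 fun k => ((mem_iInter.1 hx) k).1
  exact ((mem_iInter.1 hx) 0).2 (h hx1)

lemma exists_hcont_level_lt [CompactSpace X] {s : ℝ} (hs : 0 < s) {A : ℕ → Set X}
    (hA : ∀ k, IsCompact (A k)) (hanti : Antitone A)
    {c : ℝ≥0∞} (h : hcont s (⋂ k, A k) < c) : ∃ k, hcont s (A k) < c := by
  obtain ⟨ε, hε, hlt⟩ := ENNReal.lt_iff_exists_add_pos_lt.1 h
  have hfin : hcont s (⋂ k, A k) ≠ ⊤ :=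
    ((le_self_add (a := hcont s (⋂ k, A k))).trans_lt hlt).ne_top
  have hε2 : (0:ℝ≥0∞) < (ε : ℝ≥0∞) / 2 := ENNReal.div_pos (by exact_mod_cast hε.ne') (by norm_num)
  obtain ⟨C, hC, hCs⟩ := hcont_lt_iff.1 (ENNReal.lt_add_right hfin hε2.ne')
  have hdne : ∀ n, EMetric.diam (C n) ≠ ⊤ := fun n =>
    (isBounded_of_compactSpace (s := C n)).ediam_ne_top
  have hchoice : ∀ n : ℕ, ∃ δ : ℝ, 0 < δ ∧
      (EMetric.diam (C n) + 2 * ENNReal.ofReal δ) ^ s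
        ≤ EMetric.diam (C n) ^ s + (ε : ℝ≥0∞) / 2 * 2⁻¹ ^ (n + 1) := by
    intro n
    exact exists_thickening_rpow hs (hdne n)
      (ENNReal.mul_pos hε2.ne' (pow_ne_zero _ (by norm_num)))
  choose δ hδ0 hδ using hchoice
  set U : ℕ → Set X := fun n => Metric.thickening (δ n) (C n) with hUdef
  have hUopen : IsOpen (⋃ n, U n) := isOpen_iUnion fun n => Metric.isOpen_thickening
  have hUsub : ⋂ k, A k ⊆ ⋃ n, U n :=
    hC.trans (iUnion_mono fun n => Metric.self_subset_thickening (hδ0 n) _)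
  obtain ⟨k, hk⟩ := exists_nat_subset_open_of_iInter hA hanti hUopen hUsub
  refine ⟨k, lt_of_le_of_lt (hcont_le hk) ?_⟩
  have hterm : ∀ n, EMetric.diam (U n) ^ s
      ≤ EMetric.diam (C n) ^ s + (ε : ℝ≥0∞) / 2 * 2⁻¹ ^ (n + 1) := by
    intro n
    have h1 : EMetric.diam (U n) ≤ EMetric.diam (C n) + 2 * ENNReal.ofReal (δ n) := by
      have h2 := Metric.ediam_thickening_le (s := C n) (δ n).toNNReal
      rw [Real.coe_toNNReal _ (hδ0 n).le] at h2
      have h3 : ((δ n).toNNReal : ℝ≥0∞) = ENNReal.ofReal (δ n) := rfl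
      rwa [h3] at h2
    exact (ENNReal.rpow_le_rpow h1 hs.le).trans (hδ n)
  calc ∑' n, EMetric.diam (U n) ^ s
      ≤ ∑' n, (EMetric.diam (C n) ^ s + (ε : ℝ≥0∞) / 2 * 2⁻¹ ^ (n + 1)) :=
        ENNReal.tsum_le_tsum hterm
    _ = (∑' n, EMetric.diam (C n) ^ s) + ∑' n, (ε : ℝ≥0∞) / 2 * 2⁻¹ ^ (n + 1) :=
        ENNReal.tsum_add
    _ = (∑' n, EMetric.diam (C n) ^ s) + (ε : ℝ≥0∞) / 2 := by rw [tsum_halves_aux]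
    _ < (hcont s (⋂ k, A k) + (ε : ℝ≥0∞) / 2) + (ε : ℝ≥0∞) / 2 :=
        ENNReal.add_lt_add_right (by
          simpa using (ENNReal.div_lt_top ENNReal.coe_ne_top (by norm_num)).ne) hCs
    _ = hcont s (⋂ k, A k) + (ε : ℝ≥0∞) := by
        rw [add_assoc, ENNReal.add_halves]
    _ < c := hlt

end AuxReg

section BiLip

variable {K : Type*} [MetricSpace K]

lemma IsBiLipContraction.exists_lipschitzWith {φ : K → K} (h : IsBiLipContraction φ) :
    ∃ L : ℝ≥0, LipschitzWith L φ := by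
  obtain ⟨c, C, _, _, h⟩ := h
  refine ⟨C.toNNReal, LipschitzWith.of_dist_le_mul fun x y => ?_⟩
  refine (h x y).2.trans (mul_le_mul_of_nonneg_right ?_ dist_nonneg)
  exact Real.le_coe_toNNReal C

lemma IsBiLipContraction.continuous {φ : K → K} (h : IsBiLipContraction φ) :
    Continuous φ := by
  obtain ⟨L, hL⟩ := h.exists_lipschitzWith
  exact hL.continuous

lemma IsBiLipContraction.injective {φ : K → K} (h : IsBiLipContraction φ) :
    Function.Injective φ := by
  obtain ⟨c, C, hc, _, h⟩ := h
  intro x y hxy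
  have h1 : c * dist x y ≤ 0 := by
    have := (h x y).1
    rwa [hxy, dist_self] at this
  have h2 : dist x y ≤ 0 := nonpos_of_mul_nonpos_right (by linarith [mul_nonneg hc.le (dist_nonneg (x := x) (y := y))]) hc
  exact dist_le_zero.1 h2

end BiLip

section Level

variable {K : Type*} [MetricSpace K] [CompactSpace K] [Nonempty K]
  {N : ℕ} {m : Fin N → ℕ} {S : ∀ i, Fin (m i) → K → K}

lemma levelSets_succ (ω : ℕ → Fin N) (k : ℕ) :
    levelSets m S univ ω (k + 1) =
      ⋃ j : Fin (m (ω 0)), S (ω 0) j '' levelSets m S univ (fun n => ω (n + 1)) k := rfl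

lemma levelSets_succ_subset : ∀ (k : ℕ) (ω : ℕ → Fin N),
    levelSets m S univ ω (k + 1) ⊆ levelSets m S univ ω k := by
  intro k
  induction k with
  | zero => intro ω; exact subset_univ _
  | succ k IH =>
    intro ω
    rw [levelSets_succ ω (k + 1), levelSets_succ ω k]
    exact iUnion_mono fun j => image_mono (IH _)

lemma levelSets_antitone (ω : ℕ → Fin N) : Antitone (levelSets m S univ ω) :=
  antitone_nat_of_succ_le fun k => levelSets_succ_subset k ω

lemma levelSets_isCompact (hS : ∀ i j, Continuous (S i j)) :
    ∀ (k : ℕ) (ω : ℕ → Fin N), IsCompact (levelSets m S univ ω k) := by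
  intro k
  induction k with
  | zero => intro ω; exact isCompact_univ
  | succ k IH =>
    intro ω
    rw [levelSets_succ]
    exact isCompact_iUnion fun j => (IH _).image (hS _ j)

lemma levelSets_congr : ∀ (k : ℕ) (ω ω' : ℕ → Fin N), (∀ i, i < k → ω i = ω' i) →
    levelSets m S univ ω k = levelSets m S univ ω' k := by
  intro k
  induction k with
  | zero => intro ω ω' _; rfl
  | succ k IH =>
    intro ω ω' h
    have h0 : ω 0 = ω' 0 := h 0 (Nat.succ_pos k)
    have ht : levelSets m S univ (fun n => ω (n + 1)) k
        = levelSets m S univ (fun n => ω' (n + 1)) k :=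
      IH _ _ fun i hi => h (i + 1) (Nat.succ_lt_succ hi)
    rw [levelSets_succ, levelSets_succ, ht, h0]

lemma attractor'_subset_level (ω : ℕ → Fin N) (k : ℕ) :
    attractorOf m S univ ω ⊆ levelSets m S univ ω k :=
  iInter_subset _ k

lemma attractor'_subset_union (hinj : ∀ i j, Function.Injective (S i j)) (ω : ℕ → Fin N) :
    attractorOf m S univ ω ⊆
      ⋃ j : Fin (m (ω 0)), S (ω 0) j '' attractorOf m S univ (fun n => ω (n + 1)) := by
  intro x hx
  have hx' : ∀ k, x ∈ ⋃ j : Fin (m (ω 0)),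
      S (ω 0) j '' levelSets m S univ (fun n => ω (n + 1)) k := by
    intro k
    have := mem_iInter.1 hx (k + 1)
    rwa [levelSets_succ] at this
  have hex : ∀ k, ∃ j : Fin (m (ω 0)), ∃ y,
      y ∈ levelSets m S univ (fun n => ω (n + 1)) k ∧ S (ω 0) j y = x := by
    intro k
    obtain ⟨j, hj⟩ := mem_iUnion.1 (hx' k)
    obtain ⟨y, hy, hxy⟩ := hj
    exact ⟨j, y, hy, hxy⟩
  choose j y hy hxy using hex
  obtain ⟨j₀, hj₀⟩ := Finite.exists_infinite_fiber j
  have hinf : (j ⁻¹' {j₀}).Infinite := Set.infinite_coe_iff.1 hj₀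
  obtain ⟨k₀, hk₀mem, _⟩ := hinf.exists_gt 0
  have hk₀ : j k₀ = j₀ := hk₀mem
  set z := y k₀ with hz
  have hzx : S (ω 0) j₀ z = x := by rw [← hk₀]; exact hxy k₀
  have hzmem : z ∈ attractorOf m S univ (fun n => ω (n + 1)) := by
    refine mem_iInter.2 fun k => ?_
    obtain ⟨k', hk'mem, hkk'⟩ := hinf.exists_gt k
    have hjk' : j k' = j₀ := hk'mem
    have : S (ω 0) j₀ (y k') = x := by rw [← hjk']; exact hxy k'
    have hy_eq : y k' = z := hinj _ j₀ (by rw [this, hzx])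
    rw [← hy_eq]
    exact levelSets_antitone _ hkk'.le (hy k')
  exact mem_iUnion.2 ⟨j₀, z, hzmem, hzx⟩

end Level

section Main

variable {K : Type*} [MetricSpace K] [CompactSpace K] [Nonempty K]
  {N : ℕ} {m : Fin N → ℕ} {S : ∀ i, Fin (m i) → K → K}

lemma hcont_attractor'_step {s : ℝ} (hs : 0 < s) (hS : ∀ i j, IsBiLipContraction (S i j))
    (ω : ℕ → Fin N) (h : hcont s (attractorOf m S univ (fun n => ω (n + 1))) = 0) :
    hcont s (attractorOf m S univ ω) = 0 := by
  have hsub := attractor'_subset_union (fun i j => (hS i j).injective) ω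
  refine le_antisymm ((hcont_mono hsub).trans_eq ?_) (zero_le (a := _))
  refine hcont_iUnion_fin_zero hs fun j => ?_
  obtain ⟨L, hL⟩ := (hS (ω 0) j).exists_lipschitzWith
  exact hcont_image_zero hs hL h

lemma hcont_attractor'_prefix {s : ℝ} (hs : 0 < s) (hS : ∀ i j, IsBiLipContraction (S i j)) :
    ∀ (M : ℕ) (v : ℕ → Fin N), hcont s (attractorOf m S univ (fun i => v (i + M))) = 0 →
      hcont s (attractorOf m S univ v) = 0 := by
  intro M
  induction M with
  | zero => intro v h; simpa using h
  | succ M IH =>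
    intro v h
    refine hcont_attractor'_step hs hS v (IH (fun n => v (n + 1)) ?_)
    exact h

theorem typical' (hN : 0 < N) (hm : ∀ i, 0 < m i)
    (hS : ∀ i j, IsBiLipContraction (S i j)) :
    {ω : ℕ → Fin N |
        dimH (attractorOf m S Set.univ ω)
          = ⨅ u : ℕ → Fin N, dimH (attractorOf m S Set.univ u)} ∈
      residual (ℕ → Fin N) := by
  borelize K
  have hFinN : Nonempty (Fin N) := ⟨⟨0, hN⟩⟩
  set F : (ℕ → Fin N) → Set K := fun ω => attractorOf m S univ ω with hF
  set I : ℝ≥0∞ := ⨅ u : ℕ → Fin N, dimH (F u) with hI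
  -- the basic open sets
  set O : ℚ → ℕ → Set (ℕ → Fin N) := fun q n =>
    ⋃ k, {ω | hcont (q : ℝ) (levelSets m S univ ω k) < ((n : ℝ≥0∞) + 1)⁻¹} with hO
  -- openness
  have hOopen : ∀ q n, IsOpen (O q n) := by
    intro q n
    refine isOpen_iUnion fun k => ?_
    have hrepr : {ω : ℕ → Fin N | hcont (q : ℝ) (levelSets m S univ ω k) < ((n : ℝ≥0∞) + 1)⁻¹}
        = (fun ω : ℕ → Fin N => fun i : Fin k => ω (i : ℕ)) ⁻¹'
          {f : Fin k → Fin N | hcont (q : ℝ) (levelSets m S univ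
            (fun i => if h : i < k then f ⟨i, h⟩ else Classical.arbitrary (Fin N)) k)
              < ((n : ℝ≥0∞) + 1)⁻¹} := by
      ext ω
      simp only [mem_setOf_eq, mem_preimage]
      have : levelSets m S univ
          (fun i => if h : i < k then ω i else Classical.arbitrary (Fin N)) k
          = levelSets m S univ ω k := by
        refine levelSets_congr k _ _ fun i hi => ?_
        simp [hi]
      rw [this]
    rw [hrepr]
    exact (isOpen_discrete _).preimage (continuous_pi fun i => continuous_apply _)
  -- density
  have hOdense : ∀ (q : ℚ) (n : ℕ), I < ENNReal.ofReal (q : ℝ) → Dense (O q n) := by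
    intro q n hq
    have hq0 : (0 : ℝ) < q := by
      have := lt_of_le_of_lt (zero_le (a := I)) hq
      exact_mod_cast ENNReal.ofReal_pos.1 this
    obtain ⟨u, hu⟩ := iInf_lt_iff.1 hq
    have hzero_u : hcont (q : ℝ) (F u) = 0 := by
      have hμ : μH[(q : ℝ)] (F u) = 0 := by
        have h1 : dimH (F u) < ((Real.toNNReal q : ℝ≥0) : ℝ≥0∞) := hu
        have := hausdorffMeasure_of_dimH_lt h1
        rwa [Real.coe_toNNReal _ hq0.le] at this
      exact le_antisymm ((hcont_le_hausdorffMeasure (by exact_mod_cast hq0) _).trans_eq hμ)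
        (zero_le (a := _))
    intro x
    refine mem_closure_iff_nhds.2 fun t ht => ?_
    rw [nhds_pi] at ht
    obtain ⟨Ifin, hIfin, tt, htt, hsub⟩ := Filter.mem_pi.1 ht
    obtain ⟨b, hb⟩ := hIfin.bddAbove
    set M := b + 1 with hM
    have hMlt : ∀ i ∈ Ifin, i < M := fun i hi => Nat.lt_succ_of_le (hb hi)
    set ω' : ℕ → Fin N := fun i => if i < M then x i else u (i - M) with hω'
    have hmem_t : ω' ∈ t := by
      refine hsub fun i hi => ?_
      have : ω' i = x i := if_pos (hMlt i hi)
      rw [this]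
      exact mem_of_mem_nhds (htt i)
    have htail : (fun i => ω' (i + M)) = u := by
      funext i
      have h1 : ¬ (i + M < M) := by omega
      simp only [hω', h1, if_false, Nat.add_sub_cancel]
    have hzero : hcont (q : ℝ) (F ω') = 0 := by
      refine hcont_attractor'_prefix (by exact_mod_cast hq0) hS M ω' ?_
      rw [show (fun i => ω' (i + M)) = u from htail]
      exact hzero_u
    have hc0 : (0 : ℝ≥0∞) < ((n : ℝ≥0∞) + 1)⁻¹ := by
      rw [ENNReal.inv_pos]
      exact ENNReal.add_ne_top.2 ⟨ENNReal.natCast_ne_top n, ENNReal.one_ne_top⟩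
    have hlevels : ∃ k, hcont (q : ℝ) (levelSets m S univ ω' k) < ((n : ℝ≥0∞) + 1)⁻¹ := by
      refine exists_hcont_level_lt (by exact_mod_cast hq0)
        (fun k => levelSets_isCompact (fun i j => (hS i j).continuous) k ω')
        (levelSets_antitone ω') ?_
      rw [show (⋂ k, levelSets m S univ ω' k) = F ω' from rfl, hzero]
      exact hc0
    obtain ⟨k, hk⟩ := hlevels
    exact ⟨ω', hmem_t, mem_iUnion.2 ⟨k, hk⟩⟩
  -- assemble via mem_residual_iff
  refine mem_residual_iff.2
    ⟨{T | ∃ p : ℚ × ℕ, I < ENNReal.ofReal (p.1 : ℝ) ∧ T = O p.1 p.2}, ?_, ?_, ?_, ?_⟩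
  · rintro T ⟨p, _, rfl⟩; exact hOopen p.1 p.2
  · rintro T ⟨p, hp, rfl⟩; exact hOdense p.1 p.2 hp
  · exact Set.Countable.mono (fun T hT => by
      obtain ⟨p, _, rfl⟩ := hT; exact mem_range_self p) (countable_range fun p : ℚ × ℕ => O p.1 p.2)
  · intro ω hω
    simp only [mem_sInter, mem_setOf_eq] at hω
    have hIle : I ≤ dimH (F ω) := iInf_le _ ω
    refine le_antisymm ?_ hIle
    refine le_of_forall_gt_imp_ge_of_dense fun c hc => ?_
    obtain ⟨q, hq0, hIq, hqc⟩ := ENNReal.lt_iff_exists_rat_btwn.1 hc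
    have hIq' : I < ENNReal.ofReal (q : ℝ) := hIq
    have hmem : ∀ n : ℕ, ω ∈ O q n := fun n => hω _ ⟨(q, n), hIq', rfl⟩
    have hqpos : (0 : ℝ) < q := by
      have := lt_of_le_of_lt (zero_le (a := I)) hIq'
      exact_mod_cast ENNReal.ofReal_pos.1 this
    have hz : hcont (q : ℝ) (F ω) = 0 := by
      by_contra hne
      obtain ⟨n, hn⟩ := ENNReal.exists_inv_nat_lt hne
      obtain ⟨k, hk⟩ := mem_iUnion.1 (hmem n)
      have h1 : hcont (q : ℝ) (F ω) ≤ hcont (q : ℝ) (levelSets m S univ ω k) :=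
        hcont_mono (attractor'_subset_level ω k)
      have h2 : ((n : ℝ≥0∞) + 1)⁻¹ ≤ ((n : ℝ≥0∞))⁻¹ :=
        ENNReal.inv_le_inv' le_self_add
      have : hcont (q : ℝ) (F ω) < hcont (q : ℝ) (F ω) :=
        lt_of_le_of_lt h1 (lt_of_lt_of_le hk (h2.trans hn.le))
      exact lt_irrefl _ this
    have hdim : dimH (F ω) ≤ ENNReal.ofReal (q : ℝ) :=
      dimH_le_of_hcont_zero (by exact_mod_cast hqpos) hz
    refine hdim.trans ?_
    calc ENNReal.ofReal (q : ℝ) = ((Real.toNNReal (q : ℝ) : ℝ≥0) : ℝ≥0∞) := rfl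
      _ ≤ c := hqc.le

end Main

/-- The typical Hausdorff dimension of the random attractor is infimal. -/
theorem typical_dimH_eq_inf {K : Type*} [MetricSpace K] [CompactSpace K] [Nonempty K]
    {N : ℕ} (hN : 0 < N) (m : Fin N → ℕ) (hm : ∀ i, 0 < m i)
    (S : ∀ i, Fin (m i) → K → K) (hS : ∀ i j, IsBiLipContraction (S i j)) :
    {ω : ℕ → Fin N |
        dimH (attractorOf m S Set.univ ω) = ⨅ u : ℕ → Fin N, dimH (attractorOf m S Set.univ u)} ∈
      residual (ℕ → Fin N) := by
  exact typical' hN hm hS
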